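/- arXiv:1910.01153 — 3 statements merged into one kernel-verified Lean document; each statement's English description precedes it below -/
import Mathlib

section
/- Let ρ be a σ-finite Borel measure on [0,∞) whose Laplace transform L(t) = ∫_{[0,∞)} e^{-tx} ρ(dx) is finite for every t > 0, and write ρ(x) = ρ([0,x]). Let α, d > 0, let x₀ ≥ 0, and let g : (0,∞) → (0,∞) be nondecreasing and continuous on [x₀,∞), so that for t ≥ t₀ := x₀^{d+α} g(x₀^α) there is a unique x_t ≥ x₀ with t = x_t^{d+α} g(x_t^α); set h(t) = g(x_t^α). If liminf_{t→∞} (log L(t)) / (t^{d/(d+α)} h(t)^{α/(d+α)}) ≥ -A₁ for some A₁ ∈ (0,∞), then for every B₁ > A₁ one has liminf_{x→0+} (x^{d/α} / g(B₁/x)) · log ρ(x) ≥ -A₁ B₁^{d/α}. -/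
open MeasureTheory Filter Set Topology Real ENNReal

private lemma liminf_lb {f : ℝ → ℝ} {l : Filter ℝ} {c : ℝ} (hc : c ≤ 0)
    (h : ∀ ε > 0, ∀ᶠ x in l, c - ε ≤ f x) : c ≤ Filter.liminf f l := by
  rw [Filter.liminf_eq]
  set S := {a | ∀ᶠ x in l, a ≤ f x} with hS
  by_cases hb : BddAbove S
  · refine le_of_forall_sub_le fun ε hε => ?_
    exact le_csSup hb (h ε hε)
  · rw [csSup_of_not_bddAbove hb, Real.sSup_empty]; exact hc

private lemma liminf_lb_empty {f : ℝ → ℝ} {l : Filter ℝ} {c : ℝ} (hc : c ≤ 0)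
    (h : ∀ b : ℝ, ¬ ∀ᶠ x in l, b ≤ f x) : c ≤ Filter.liminf f l := by
  rw [Filter.liminf_eq]
  have hempty : {a | ∀ᶠ x in l, a ≤ f x} = ∅ := by
    ext a; simpa using h a
  rw [hempty, Real.sSup_empty]; exact hc

private lemma liminf_extract {q : ℝ → ℝ} {A : ℝ} (h : -A ≤ Filter.liminf q Filter.atTop) :
    (∀ ε > 0, ∀ᶠ t in Filter.atTop, -A - ε ≤ q t) ∨
      (∀ b : ℝ, ¬ ∀ᶠ t in Filter.atTop, b ≤ q t) := by
  set S := {a | ∀ᶠ t in Filter.atTop, a ≤ q t} with hS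
  by_cases hne : S.Nonempty
  · left
    intro ε hε
    by_cases hb : BddAbove S
    · have h2 : -A - ε < sSup S := by
        rw [Filter.liminf_eq] at h; linarith
      obtain ⟨a, haS, hlt⟩ := exists_lt_of_lt_csSup hne h2
      exact haS.mono fun t ht => by linarith
    · obtain ⟨a, haS, hlt⟩ := not_bddAbove_iff.mp hb (-A - ε)
      exact haS.mono fun t ht => le_trans hlt.le ht
  · right; intro b hb; exact hne ⟨b, hb⟩

set_option maxHeartbeats 1000000 in
/-- Tauberian theorem, lower bound: Let ρ be a σ-finite Borel measure
on [0,∞) with Laplace transform `L(t) = ∫ e^{-tx} ρ(dx)` finite for all t > 0. With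
g nondecreasing on (0,∞) and continuous on [x₀,∞), `x_t` the unique solution ≥ x₀
of `t = x^{d+α} g(x^α)` for `t ≥ t₀ = x₀^{d+α} g(x₀^α)`, and `h(t) = g(x_t^α)`:
if `liminf_{t→∞} log L(t) / (t^{d/(d+α)} h(t)^{α/(d+α)}) ≥ -A₁`, then for every
`B₁ > A₁`, `liminf_{x→0+} (x^{d/α}/g(B₁/x)) log ρ([0,x]) ≥ -A₁ B₁^{d/α}`. -/
theorem stmt12 (ρ : Measure ℝ) [SigmaFinite ρ] (hρsupp : ρ (Set.Iio (0:ℝ)) = 0)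
    (hLfin : ∀ t > (0:ℝ),
      (∫⁻ x in Set.Ici (0:ℝ), ENNReal.ofReal (Real.exp (-t * x)) ∂ρ) ≠ ⊤)
    (α d x₀ : ℝ) (hα : 0 < α) (hd : 0 < d) (hx₀ : 0 ≤ x₀)
    (g : ℝ → ℝ) (hgpos : ∀ x > (0:ℝ), 0 < g x) (hgmono : MonotoneOn g (Set.Ioi (0:ℝ)))
    (hgcont : ContinuousOn g (Set.Ici x₀))
    (xt : ℝ → ℝ)
    (hxt : ∀ t ≥ x₀ ^ (d+α) * g (x₀ ^ α),
      x₀ ≤ xt t ∧ t = (xt t) ^ (d+α) * g ((xt t) ^ α))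
    (A₁ : ℝ) (hA₁ : 0 < A₁)
    (hliminf : -A₁ ≤ liminf (fun t =>
        Real.log ((∫⁻ x in Set.Ici (0:ℝ), ENNReal.ofReal (Real.exp (-t * x)) ∂ρ).toReal)
          / (t ^ (d/(d+α)) * (g ((xt t) ^ α)) ^ (α/(d+α)))) atTop) :
    ∀ B₁ > A₁,
      -A₁ * B₁ ^ (d/α) ≤ liminf (fun x =>
        x ^ (d/α) / g (B₁ / x) * Real.log ((ρ (Set.Icc 0 x)).toReal))
        (nhdsWithin 0 (Set.Ioi (0:ℝ))) := by
  intro B₁ hB₁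
  have hB₁pos : 0 < B₁ := hA₁.trans hB₁
  have hda : 0 < d + α := by linarith
  set L : ℝ → ℝ≥0∞ := fun t => ∫⁻ x in Set.Ici (0:ℝ), ENNReal.ofReal (Real.exp (-t * x)) ∂ρ
    with hLdef
  have hc₀ : -A₁ * B₁ ^ (d/α) ≤ 0 := by
    have : (0:ℝ) ≤ B₁ ^ (d/α) := Real.rpow_nonneg hB₁pos.le _
    nlinarith
  have hL1fin : L 1 ≠ ⊤ := hLfin 1 one_pos
  have hmeas : ∀ t : ℝ, Measurable fun y : ℝ => ENNReal.ofReal (Real.exp (-t * y)) := by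
    intro t
    exact (Real.continuous_exp.comp ((continuous_const.mul continuous_id))).measurable.ennreal_ofReal
  -- finiteness of ρ (Icc 0 x)
  have hfin : ∀ x : ℝ, 0 ≤ x → ρ (Set.Icc 0 x) ≠ ⊤ := by
    intro x hx
    have key : ENNReal.ofReal (Real.exp (-x)) * ρ (Set.Icc 0 x) ≤ L 1 := by
      have h1 : ENNReal.ofReal (Real.exp (-x)) * ρ (Set.Icc 0 x)
          = ∫⁻ _ in Set.Icc 0 x, ENNReal.ofReal (Real.exp (-x)) ∂ρ := by
        rw [setLIntegral_const]
      rw [h1]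
      refine le_trans (setLIntegral_mono' measurableSet_Icc ?_)
        (lintegral_mono_set (Set.Icc_subset_Ici_self))
      intro y hy
      exact ENNReal.ofReal_le_ofReal (Real.exp_le_exp.mpr (by nlinarith [hy.1, hy.2]))
    intro htop
    rw [htop, ENNReal.mul_top (by simp [Real.exp_pos])] at key
    exact hL1fin (top_le_iff.mp key)
  -- main case split on whether ρ vanishes near 0
  by_cases hzero : ∃ x₁ > (0:ℝ), ρ (Set.Icc 0 x₁) = 0
  · obtain ⟨x₁, hx₁, hρx₁⟩ := hzero
    refine liminf_lb hc₀ fun ε hε => ?_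
    filter_upwards [Ioo_mem_nhdsGT_of_mem (Set.mem_Ico.mpr ⟨le_refl (0:ℝ), hx₁⟩)] with x hx
    have : ρ (Set.Icc 0 x) = 0 :=
      le_antisymm (le_trans (measure_mono (Set.Icc_subset_Icc_right hx.2.le)) hρx₁.le) zero_le
    simp only [this, ENNReal.toReal_zero, Real.log_zero, mul_zero]
    linarith
  push_neg at hzero
  have hFpos : ∀ x > (0:ℝ), 0 < (ρ (Set.Icc 0 x)).toReal := fun x hx =>
    ENNReal.toReal_pos (hzero x hx) (hfin x hx.le)
  have hLpos : ∀ t > (0:ℝ), 0 < (L t).toReal := by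
    intro t ht
    refine ENNReal.toReal_pos (fun h0 => ?_) (hLfin t ht)
    have key : ENNReal.ofReal (Real.exp (-t)) * ρ (Set.Icc 0 1) ≤ L t := by
      have h1 : ENNReal.ofReal (Real.exp (-t)) * ρ (Set.Icc 0 1)
          = ∫⁻ _ in Set.Icc (0:ℝ) 1, ENNReal.ofReal (Real.exp (-t)) ∂ρ := by
        rw [setLIntegral_const]
      rw [h1]
      refine le_trans (setLIntegral_mono' measurableSet_Icc ?_)
        (lintegral_mono_set (Set.Icc_subset_Ici_self))
      intro y hy
      exact ENNReal.ofReal_le_ofReal (Real.exp_le_exp.mpr (by nlinarith [hy.1, hy.2]))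
    rw [h0] at key
    have : ρ (Set.Icc (0:ℝ) 1) = 0 := by
      have h2 : ENNReal.ofReal (Real.exp (-t)) * ρ (Set.Icc 0 1) = 0 := le_antisymm key zero_le
      rcases mul_eq_zero.mp h2 with h3 | h3
      · exact absurd h3 (by simp [ENNReal.ofReal_eq_zero, not_le.mpr (Real.exp_pos (-t))])
      · exact h3
    exact hzero 1 one_pos this
  set C₂ := (L 1).toReal with hC₂def
  have hC₂ : 0 < C₂ := hLpos 1 one_pos
  have hφmono : ∀ y z : ℝ, 0 < y → y ≤ z →
      y ^ (d+α) * g (y ^ α) ≤ z ^ (d+α) * g (z ^ α) := by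
    intro y z hy hyz
    have hz : 0 < z := lt_of_lt_of_le hy hyz
    refine mul_le_mul (Real.rpow_le_rpow hy.le hyz hda.le)
      (hgmono (Set.mem_Ioi.mpr (Real.rpow_pos_of_pos hy α))
        (Set.mem_Ioi.mpr (Real.rpow_pos_of_pos hz α))
        (Real.rpow_le_rpow hy.le hyz hα.le))
      (hgpos _ (Real.rpow_pos_of_pos hy α)).le (Real.rpow_nonneg hz.le _)
  have hφstrict : ∀ y z : ℝ, 0 < y → y < z →
      y ^ (d+α) * g (y ^ α) < z ^ (d+α) * g (z ^ α) := by
    intro y z hy hyz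
    have hz : 0 < z := hy.trans hyz
    refine mul_lt_mul (Real.rpow_lt_rpow hy.le hyz hda)
      (hgmono (Set.mem_Ioi.mpr (Real.rpow_pos_of_pos hy α))
        (Set.mem_Ioi.mpr (Real.rpow_pos_of_pos hz α))
        (Real.rpow_le_rpow hy.le hyz.le hα.le))
      (hgpos _ (Real.rpow_pos_of_pos hy α)) (Real.rpow_nonneg hz.le _)
  have huniq : ∀ y z : ℝ, 0 < y → 0 < z →
      y ^ (d+α) * g (y ^ α) = z ^ (d+α) * g (z ^ α) → y = z := by
    intro y z hy hz heq
    rcases lt_trichotomy y z with h | h | h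
    · exact absurd heq (ne_of_lt (hφstrict y z hy h))
    · exact h
    · exact absurd heq.symm (ne_of_lt (hφstrict z y hz h))
  have ht₀0 : x₀ = 0 → x₀ ^ (d+α) * g (x₀ ^ α) = 0 := by
    intro h; rw [h, Real.zero_rpow hda.ne', zero_mul]
  have hXid : ∀ X : ℝ, 0 < X → x₀ ≤ X → xt (X ^ (d+α) * g (X ^ α)) = X := by
    intro X hX hx₀X
    have hTpos : 0 < X ^ (d+α) * g (X ^ α) :=
      mul_pos (Real.rpow_pos_of_pos hX _) (hgpos _ (Real.rpow_pos_of_pos hX α))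
    have hT₀ : X ^ (d+α) * g (X ^ α) ≥ x₀ ^ (d+α) * g (x₀ ^ α) := by
      rcases eq_or_lt_of_le hx₀ with h | h
      · rw [ht₀0 h.symm]; exact hTpos.le
      · exact hφmono x₀ X h hx₀X
    obtain ⟨h1, h2⟩ := hxt _ hT₀
    have hpos : 0 < xt (X ^ (d+α) * g (X ^ α)) := by
      rcases eq_or_lt_of_le (hx₀.trans h1) with h | h
      · exfalso
        rw [← h, Real.zero_rpow hda.ne', zero_mul] at h2
        rw [h2] at hTpos; exact lt_irrefl 0 hTpos
      · exact h
    exact huniq _ _ hpos hX h2.symm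
  have hxt_top : ∀ M : ℝ, ∀ᶠ t in atTop, M ≤ xt t := by
    intro M
    set M' := max M (max x₀ 1) with hM'
    have hM'pos : 0 < M' := lt_of_lt_of_le one_pos (le_max_of_le_right (le_max_right _ _))
    filter_upwards [Filter.eventually_ge_atTop (max (x₀ ^ (d+α) * g (x₀ ^ α))
      (M' ^ (d+α) * g (M' ^ α) + 1))] with t ht
    have ht₀ : t ≥ x₀ ^ (d+α) * g (x₀ ^ α) := le_trans (le_max_left _ _) ht
    obtain ⟨h1, h2⟩ := hxt t ht₀
    have hM'φ : 0 < M' ^ (d+α) * g (M' ^ α) :=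
      mul_pos (Real.rpow_pos_of_pos hM'pos _) (hgpos _ (Real.rpow_pos_of_pos hM'pos α))
    have htM : M' ^ (d+α) * g (M' ^ α) + 1 ≤ t := le_trans (le_max_right _ _) ht
    have htpos : 0 < t := by linarith
    have hxtpos : 0 < xt t := by
      rcases eq_or_lt_of_le (hx₀.trans h1) with h | h
      · exfalso; rw [← h, Real.zero_rpow hda.ne', zero_mul] at h2; linarith
      · exact h
    by_contra hcon
    push_neg at hcon
    have hle : xt t ≤ M' := le_trans hcon.le (le_max_left _ _)
    have hmle := hφmono (xt t) M' hxtpos hle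
    rw [← h2] at hmle
    linarith
  have hsplit : ∀ t ≥ (1:ℝ), ∀ x > (0:ℝ),
      (L t).toReal ≤ (ρ (Set.Icc 0 x)).toReal + Real.exp (-(t-1)*x) * C₂ := by
    intro t ht x hx
    have hB1 : (∫⁻ y in Set.Icc (0:ℝ) x, ENNReal.ofReal (Real.exp (-t * y)) ∂ρ)
        ≤ ρ (Set.Icc 0 x) := by
      calc (∫⁻ y in Set.Icc (0:ℝ) x, ENNReal.ofReal (Real.exp (-t * y)) ∂ρ)
          ≤ ∫⁻ _ in Set.Icc (0:ℝ) x, 1 ∂ρ := by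
            refine setLIntegral_mono' measurableSet_Icc fun y hy => ?_
            refine ENNReal.ofReal_le_one.mpr (Real.exp_le_one_iff.mpr ?_)
            nlinarith [hy.1]
        _ = ρ (Set.Icc 0 x) := setLIntegral_one _
    have hB2 : (∫⁻ y in Set.Ioi x, ENNReal.ofReal (Real.exp (-t * y)) ∂ρ)
        ≤ ENNReal.ofReal (Real.exp (-(t-1)*x)) * L 1 := by
      calc (∫⁻ y in Set.Ioi x, ENNReal.ofReal (Real.exp (-t * y)) ∂ρ)
          ≤ ∫⁻ y in Set.Ioi x, ENNReal.ofReal (Real.exp (-(t-1)*x)) *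
              ENNReal.ofReal (Real.exp (-1 * y)) ∂ρ := by
            refine setLIntegral_mono' measurableSet_Ioi fun y hy => ?_
            rw [← ENNReal.ofReal_mul (Real.exp_nonneg _), ← Real.exp_add]
            refine ENNReal.ofReal_le_ofReal (Real.exp_le_exp.mpr ?_)
            have hxy : x ≤ y := (Set.mem_Ioi.mp hy).le
            nlinarith
        _ = ENNReal.ofReal (Real.exp (-(t-1)*x)) *
              ∫⁻ y in Set.Ioi x, ENNReal.ofReal (Real.exp (-1 * y)) ∂ρ :=
            lintegral_const_mul _ (hmeas 1)
        _ ≤ ENNReal.ofReal (Real.exp (-(t-1)*x)) * L 1 := by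
            have hsub : Set.Ioi x ⊆ Set.Ici (0:ℝ) := fun y hy => le_of_lt (lt_trans hx hy)
            exact mul_le_mul_right (lintegral_mono_set hsub) _
    have hLle : L t ≤ ρ (Set.Icc 0 x) + ENNReal.ofReal (Real.exp (-(t-1)*x)) * L 1 := by
      have heq : L t = ∫⁻ y in Set.Icc 0 x ∪ Set.Ioi x,
          ENNReal.ofReal (Real.exp (-t * y)) ∂ρ := by
        rw [Set.Icc_union_Ioi_eq_Ici hx.le]
      rw [heq]
      exact le_trans (lintegral_union_le _ _ _) (add_le_add hB1 hB2)
    have h2fin : ENNReal.ofReal (Real.exp (-(t-1)*x)) * L 1 ≠ ⊤ :=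
      ENNReal.mul_ne_top ENNReal.ofReal_ne_top hL1fin
    have hfinal := ENNReal.toReal_mono
      (ENNReal.add_ne_top.mpr ⟨hfin x hx.le, h2fin⟩) hLle
    rw [ENNReal.toReal_add (hfin x hx.le) h2fin, ENNReal.toReal_mul,
      ENNReal.toReal_ofReal (Real.exp_nonneg _)] at hfinal
    exact hfinal
  have hrev : ∀ t > (0:ℝ), ∀ x > (0:ℝ),
      Real.exp (-t*x) * (ρ (Set.Icc 0 x)).toReal ≤ (L t).toReal := by
    intro t ht x hx
    have key : ENNReal.ofReal (Real.exp (-t*x)) * ρ (Set.Icc 0 x) ≤ L t := by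
      have h1 : ENNReal.ofReal (Real.exp (-t*x)) * ρ (Set.Icc 0 x)
          = ∫⁻ _ in Set.Icc (0:ℝ) x, ENNReal.ofReal (Real.exp (-t*x)) ∂ρ := by
        rw [setLIntegral_const]
      rw [h1]
      refine le_trans (setLIntegral_mono' measurableSet_Icc fun y hy => ?_)
        (lintegral_mono_set Set.Icc_subset_Ici_self)
      exact ENNReal.ofReal_le_ofReal (Real.exp_le_exp.mpr (by nlinarith [hy.2]))
    have hfinal := ENNReal.toReal_mono (hLfin t ht) key
    rw [ENNReal.toReal_mul, ENNReal.toReal_ofReal (Real.exp_nonneg _)] at hfinal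
    exact hfinal
  have hψcalc : ∀ z : ℝ, 0 < z →
      (z ^ (d+α) * g (z ^ α)) ^ (d/(d+α)) * (g (z ^ α)) ^ (α/(d+α))
        = z ^ d * g (z ^ α) := by
    intro z hz
    have hgz : 0 < g (z ^ α) := hgpos _ (Real.rpow_pos_of_pos hz α)
    have h1 : (z ^ (d+α)) ^ (d/(d+α)) = z ^ d := by
      rw [← Real.rpow_mul hz.le]
      congr 1
      field_simp
    rw [Real.mul_rpow (Real.rpow_nonneg hz.le _) hgz.le, h1, mul_assoc,
      ← Real.rpow_add hgz]
    have h2 : d/(d+α) + α/(d+α) = 1 := by field_simp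
    rw [h2, Real.rpow_one]
  rcases liminf_extract hliminf with hgood | hbad
  · -- good branch: eventual lower bound on log L
    refine liminf_lb hc₀ fun ε hε => ?_
    have hBd : 0 < B₁ ^ (d/α) := Real.rpow_pos_of_pos hB₁pos _
    have hgB : 0 < g B₁ := hgpos B₁ hB₁pos
    set η := min (ε/(2*B₁^(d/α))) ((B₁-A₁)/2) with hηdef
    have hηpos : 0 < η := lt_min (by positivity) (by linarith)
    have hη1 : η * B₁^(d/α) ≤ ε/2 := by
      calc η * B₁^(d/α) ≤ (ε/(2*B₁^(d/α))) * B₁^(d/α) :=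
            mul_le_mul_of_nonneg_right (min_le_left _ _) hBd.le
        _ = ε/2 := by field_simp
    have hη2 : η ≤ (B₁-A₁)/2 := min_le_right _ _
    have hκpos : 0 < B₁ - A₁ - η := by linarith
    set κ := (B₁ - A₁ - η) * B₁^(d/α) with hκdef
    have hκ : 0 < κ := by positivity
    obtain ⟨T₁, hT₁⟩ := Filter.eventually_atTop.mp (hgood η hηpos)
    set U₀ := max ((Real.log C₂ + 2)/κ) 1 with hU₀def
    have hU₀pos : 0 < U₀ := lt_of_lt_of_le one_pos (le_max_right _ _)
    have hT₁1 : 0 < max T₁ 1 := lt_of_lt_of_le one_pos (le_max_right _ _)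
    set K' := max T₁ 1 / g B₁ with hK'def
    have hK' : 0 < K' := by positivity
    set MX := max (max x₀ 1) (K' ^ ((d+α)⁻¹)) with hMXdef
    have hMX1 : 1 ≤ MX := le_max_of_le_left (le_max_right _ _)
    have hMXpos : 0 < MX + 1 := by linarith
    have hδ2 : 0 < B₁/(MX+1)^α := by positivity
    have hδ3 : (0:ℝ) < (g B₁ * (ε/2))^(α/d) := Real.rpow_pos_of_pos (by positivity) _
    have hδ4 : (0:ℝ) < (g B₁ / U₀)^(α/d) := Real.rpow_pos_of_pos (by positivity) _
    have hlog2 : Real.log 2 ≤ 1 := by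
      have := Real.log_le_sub_one_of_pos (by norm_num : (0:ℝ) < 2); linarith
    have hlog2' : 0 ≤ Real.log 2 := Real.log_nonneg (by norm_num)
    filter_upwards [Ioo_mem_nhdsGT_of_mem (Set.mem_Ico.mpr ⟨le_refl (0:ℝ), one_pos⟩),
      Ioo_mem_nhdsGT_of_mem (Set.mem_Ico.mpr ⟨le_refl (0:ℝ), hδ2⟩),
      Ioo_mem_nhdsGT_of_mem (Set.mem_Ico.mpr ⟨le_refl (0:ℝ), hδ3⟩),
      Ioo_mem_nhdsGT_of_mem (Set.mem_Ico.mpr ⟨le_refl (0:ℝ), hδ4⟩)]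
      with x hx1 hx2 hx3 hx4
    obtain ⟨hx0, hx1'⟩ := hx1
    have hBx : 0 < B₁ / x := by positivity
    have hBxB : B₁ ≤ B₁ / x := by
      rw [le_div_iff₀ hx0]; exact mul_le_of_le_one_right hB₁pos.le hx1'.le
    have hG : 0 < g (B₁/x) := hgpos _ hBx
    have hGB : g B₁ ≤ g (B₁/x) :=
      hgmono (Set.mem_Ioi.mpr hB₁pos) (Set.mem_Ioi.mpr hBx) hBxB
    set X := (B₁/x) ^ (α⁻¹) with hXdef
    have hX : 0 < X := Real.rpow_pos_of_pos hBx _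
    have hXα : X ^ α = B₁ / x := by
      rw [hXdef, ← Real.rpow_mul hBx.le, inv_mul_cancel₀ hα.ne', Real.rpow_one]
    have hXMX : MX + 1 < X := by
      have h1 : (MX+1) ^ α < B₁ / x := by
        rw [lt_div_iff₀ hx0]
        have h2 := hx2.2
        rw [lt_div_iff₀ (by positivity : (0:ℝ) < (MX+1)^α)] at h2
        linarith [h2]
      calc MX + 1 = ((MX+1)^α)^(α⁻¹) := by
            rw [← Real.rpow_mul hMXpos.le, mul_inv_cancel₀ hα.ne', Real.rpow_one]
        _ < X := Real.rpow_lt_rpow (by positivity) h1 (inv_pos.mpr hα)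
    have hXx₀ : x₀ ≤ X := by
      have h1 : x₀ ≤ MX := le_max_of_le_left (le_max_left _ _); linarith
    have hX1 : 1 ≤ X := by linarith
    set t := X ^ (d+α) * g (B₁/x) with htdef
    have hgXα : g (X ^ α) = g (B₁/x) := by rw [hXα]
    have hxtt : xt t = X := by
      have h1 := hXid X hX hXx₀
      rw [hgXα] at h1
      exact h1
    have htpos : 0 < t := mul_pos (Real.rpow_pos_of_pos hX _) hG
    have hXK : K' ≤ X ^ (d+α) := by
      have h1 : K' ^ ((d+α)⁻¹) ≤ X := le_trans (le_max_right _ _) (by linarith : MX ≤ X)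
      calc K' = (K' ^ ((d+α)⁻¹)) ^ (d+α) := by
            rw [← Real.rpow_mul hK'.le, inv_mul_cancel₀ hda.ne', Real.rpow_one]
        _ ≤ X ^ (d+α) := Real.rpow_le_rpow (by positivity) h1 hda.le
    have htK : max T₁ 1 ≤ t := by
      calc max T₁ 1 = K' * g B₁ := (div_mul_cancel₀ _ hgB.ne').symm
        _ ≤ X ^ (d+α) * g (B₁/x) :=
            mul_le_mul hXK hGB hgB.le (Real.rpow_nonneg hX.le _)
    have ht1 : (1:ℝ) ≤ t := le_trans (le_max_right _ _) htK
    have hqt := hT₁ t (le_trans (le_max_left _ _) htK)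
    rw [hxtt, hgXα] at hqt
    have hψeq0 := hψcalc X hX
    rw [hgXα, ← htdef] at hψeq0
    set P := x ^ (d/α) with hPdef
    have hP : 0 < P := Real.rpow_pos_of_pos hx0 _
    have hXd : X ^ d = B₁^(d/α) / P := by
      rw [hXdef, ← Real.rpow_mul hBx.le, Real.div_rpow hB₁pos.le hx0.le,
        inv_mul_eq_div, hPdef]
    have hψval : t ^ (d/(d+α)) * g (B₁/x) ^ (α/(d+α)) = B₁^(d/α) * g (B₁/x) / P := by
      rw [hψeq0, hXd]; ring
    have htx : t * x = B₁^(d/α) * B₁ * g (B₁/x) / P := by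
      have hXda : X ^ (d+α) = B₁^(d/α) * B₁ / (P * x) := by
        rw [hXdef, ← Real.rpow_mul hBx.le, Real.div_rpow hB₁pos.le hx0.le]
        have e1 : α⁻¹ * (d+α) = d/α + 1 := by field_simp
        rw [e1, Real.rpow_add hB₁pos, Real.rpow_one, Real.rpow_add hx0, Real.rpow_one,
          hPdef]
      rw [htdef, hXda]
      field_simp
    have hψpos : 0 < t ^ (d/(d+α)) * g (B₁/x) ^ (α/(d+α)) :=
      mul_pos (Real.rpow_pos_of_pos htpos _) (Real.rpow_pos_of_pos hG _)
    have hlogL : (-A₁ - η) * (t ^ (d/(d+α)) * g (B₁/x) ^ (α/(d+α)))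
        ≤ Real.log (L t).toReal := (le_div_iff₀ hψpos).mp hqt
    rw [hψval] at hlogL
    have hLlb : Real.exp ((-A₁ - η) * (B₁^(d/α) * g (B₁/x) / P)) ≤ (L t).toReal :=
      le_trans (Real.exp_le_exp.mpr hlogL) (le_of_eq (Real.exp_log (hLpos t htpos)))
    have hP3 : P < g B₁ * (ε/2) := by
      calc P = x ^ (d/α) := hPdef
        _ < ((g B₁ * (ε/2))^(α/d))^(d/α) :=
            Real.rpow_lt_rpow hx0.le hx3.2 (by positivity)
        _ = g B₁ * (ε/2) := by
            rw [← Real.rpow_mul (by positivity)]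
            rw [show (α/d)*(d/α) = 1 by field_simp, Real.rpow_one]
    have hP4 : P < g B₁ / U₀ := by
      calc P = x ^ (d/α) := hPdef
        _ < ((g B₁ / U₀)^(α/d))^(d/α) :=
            Real.rpow_lt_rpow hx0.le hx4.2 (by positivity)
        _ = g B₁ / U₀ := by
            rw [← Real.rpow_mul (by positivity)]
            rw [show (α/d)*(d/α) = 1 by field_simp, Real.rpow_one]
    have hκu : Real.log C₂ + 2 ≤ κ * (g (B₁/x) / P) := by
      have h1 : U₀ ≤ g B₁ / P := by
        rw [le_div_iff₀ hP]
        have h2 := (lt_div_iff₀ hU₀pos).mp hP4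
        linarith [h2]
      have h2 : U₀ ≤ g (B₁/x) / P := by
        refine le_trans h1 ?_
        gcongr
      have h3 : (Real.log C₂ + 2)/κ ≤ g (B₁/x)/P := le_trans (le_max_left _ _) h2
      rw [div_le_iff₀ hκ] at h3
      linarith [h3]
    have hD : Real.exp (-(t-1)*x) * C₂
        ≤ (1/2) * Real.exp ((-A₁ - η) * (B₁^(d/α) * g (B₁/x) / P)) := by
      have e1 : Real.exp (-(t-1)*x) * C₂ = Real.exp (-(t-1)*x + Real.log C₂) := by
        rw [Real.exp_add, Real.exp_log hC₂]
      have e2 : (1/2) * Real.exp ((-A₁ - η) * (B₁^(d/α) * g (B₁/x) / P))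
          = Real.exp ((-A₁ - η) * (B₁^(d/α) * g (B₁/x) / P) - Real.log 2) := by
        rw [Real.exp_sub, Real.exp_log (by norm_num : (0:ℝ) < 2)]; ring
      rw [e1, e2]
      refine Real.exp_le_exp.mpr ?_
      have e3 : -(t-1)*x = -(t*x) + x := by ring
      rw [e3, htx]
      rw [hκdef] at hκu
      ring_nf at hκu ⊢
      linarith [hκu, hx1'.le, hlog2]
    have hsp := hsplit t ht1 x hx0
    have hF : (1/2) * Real.exp ((-A₁ - η) * (B₁^(d/α)*g (B₁/x)/P))
        ≤ (ρ (Set.Icc 0 x)).toReal := by linarith [hLlb, hD, hsp]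
    have hlogF : -Real.log 2 + (-A₁ - η) * (B₁^(d/α)*g (B₁/x)/P)
        ≤ Real.log ((ρ (Set.Icc 0 x)).toReal) := by
      have h1 := Real.log_le_log (by positivity) hF
      rw [Real.log_mul (by norm_num) (Real.exp_ne_zero _), Real.log_exp,
        show Real.log (1/2 : ℝ) = -Real.log 2 by rw [one_div, Real.log_inv]] at h1
      exact h1
    have hw : 0 < P / g (B₁/x) := by positivity
    have hmul := mul_le_mul_of_nonneg_left hlogF hw.le
    have hr : (P / g (B₁/x)) * (-Real.log 2 + (-A₁ - η) * (B₁^(d/α)*g (B₁/x)/P))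
        = -((P/g (B₁/x))*Real.log 2) + (-A₁-η)*B₁^(d/α) := by
      field_simp
    rw [hr] at hmul
    have hwlog2 : (P / g (B₁/x)) * Real.log 2 ≤ ε/2 := by
      have h1 : P / g (B₁/x) ≤ P / g B₁ := by gcongr
      have h2 : P / g B₁ ≤ ε/2 := by
        rw [div_le_iff₀ hgB]; linarith [hP3]
      have h3 : (P / g (B₁/x)) * Real.log 2 ≤ (P / g (B₁/x)) * 1 :=
        mul_le_mul_of_nonneg_left hlog2 hw.le
      linarith [h1, h2, h3]
    linarith [hmul, hwlog2, hη1]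
  · -- degenerate branch: the set for the hypothesis liminf is empty
    refine liminf_lb_empty hc₀ fun b hb => ?_
    obtain ⟨δ, hδ, hsub⟩ := mem_nhdsGT_iff_exists_Ioo_subset.mp hb
    have hδpos : (0:ℝ) < δ := hδ
    have hBd : 0 < B₁ ^ (d/α) := Real.rpow_pos_of_pos hB₁pos _
    set a := (b - 1 - B₁^(d/α)*B₁)/B₁^(d/α) with hadef
    set M := max 1 ((B₁/δ)^(α⁻¹)) + 1 with hMdef
    have hM1 : 1 ≤ M := by
      have := le_max_left (1:ℝ) ((B₁/δ)^(α⁻¹)); rw [hMdef]; linarith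
    have hfreq := Filter.not_eventually.mp (hbad a)
    obtain ⟨t, hqa, hM, ht⟩ := (hfreq.and_eventually ((hxt_top M).and
      (Filter.eventually_ge_atTop (max (x₀ ^ (d+α) * g (x₀ ^ α)) 1)))).exists
    have ht₀ : x₀ ^ (d+α) * g (x₀ ^ α) ≤ t := le_trans (le_max_left _ _) ht
    have ht1 : (1:ℝ) ≤ t := le_trans (le_max_right _ _) ht
    have htpos : (0:ℝ) < t := lt_of_lt_of_le one_pos ht1
    obtain ⟨hz₀, hzeq⟩ := hxt t ht₀
    set z := xt t with hzdef
    have hz1 : 1 ≤ z := le_trans hM1 hM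
    have hzpos : 0 < z := lt_of_lt_of_le one_pos hz1
    have hzα : 0 < z ^ α := Real.rpow_pos_of_pos hzpos _
    have hGz : 0 < g (z ^ α) := hgpos _ hzα
    set x := B₁ / z ^ α with hxdef
    have hxpos : 0 < x := by positivity
    have hxδ : x < δ := by
      have h1 : (B₁/δ)^(α⁻¹) < z := by
        have h2 := le_max_right (1:ℝ) ((B₁/δ)^(α⁻¹))
        rw [hMdef] at hM; linarith
      have h2 : B₁/δ < z ^ α := by
        calc B₁/δ = ((B₁/δ)^(α⁻¹))^α := by
              rw [← Real.rpow_mul (by positivity), inv_mul_cancel₀ hα.ne', Real.rpow_one]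
          _ < z ^ α := Real.rpow_lt_rpow (by positivity) h1 hα
      rw [hxdef, div_lt_iff₀ hzα]
      have h3 := (div_lt_iff₀ hδpos).mp h2
      linarith
    have hfb := hsub ⟨hxpos, hxδ⟩
    simp only [Set.mem_setOf_eq] at hfb
    have hBx_id : B₁ / x = z ^ α := by
      rw [hxdef]; field_simp
    rw [hBx_id] at hfb
    have hqa' : Real.log (L t).toReal / (t ^ (d/(d+α)) * g (z ^ α) ^ (α/(d+α))) < a :=
      not_le.mp hqa
    have hψpos : 0 < t ^ (d/(d+α)) * g (z ^ α) ^ (α/(d+α)) :=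
      mul_pos (Real.rpow_pos_of_pos htpos _) (Real.rpow_pos_of_pos hGz _)
    have hlogLt : Real.log (L t).toReal
        < a * (t ^ (d/(d+α)) * g (z ^ α) ^ (α/(d+α))) := (div_lt_iff₀ hψpos).mp hqa'
    have hFx : 0 < (ρ (Set.Icc 0 x)).toReal := hFpos x hxpos
    have hlogF : Real.log ((ρ (Set.Icc 0 x)).toReal) ≤ t*x + Real.log (L t).toReal := by
      have h1 := Real.log_le_log (by positivity) (hrev t htpos x hxpos)
      rw [Real.log_mul (Real.exp_ne_zero _) hFx.ne', Real.log_exp] at h1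
      linarith
    have hψeq : t ^ (d/(d+α)) * g (z ^ α) ^ (α/(d+α)) = z ^ d * g (z ^ α) := by
      rw [hzeq]; exact hψcalc z hzpos
    have hzd : 0 < z ^ d := Real.rpow_pos_of_pos hzpos _
    have hxda : x ^ (d/α) = B₁^(d/α) / z ^ d := by
      rw [hxdef, Real.div_rpow hB₁pos.le hzα.le, ← Real.rpow_mul hzpos.le]
      rw [show α * (d/α) = d by field_simp]
    have htxval : t * x = z ^ d * g (z ^ α) * B₁ := by
      rw [hzeq, hxdef, Real.rpow_add hzpos]
      field_simp
    have hkey : x ^ (d/α) / g (z ^ α) * Real.log ((ρ (Set.Icc 0 x)).toReal) ≤ b - 1 := by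
      have hw : 0 < x ^ (d/α) / g (z ^ α) := by positivity
      have hlt : Real.log ((ρ (Set.Icc 0 x)).toReal)
          ≤ t*x + a * (t ^ (d/(d+α)) * g (z ^ α) ^ (α/(d+α))) := by
        linarith [hlogF, hlogLt]
      have h2 := mul_le_mul_of_nonneg_left hlt hw.le
      have h3 : x ^ (d/α) / g (z ^ α) * (t*x + a * (t ^ (d/(d+α)) * g (z ^ α) ^ (α/(d+α))))
          = B₁^(d/α)*B₁ + a*B₁^(d/α) := by
        rw [hψeq, htxval, hxda]
        field_simp
      rw [h3] at h2
      have h4 : a*B₁^(d/α) = b - 1 - B₁^(d/α)*B₁ := div_mul_cancel₀ _ hBd.ne'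
      linarith [h2]
    linarith [hfb, hkey]
end

section
/- Let α, d > 0, let x₀ > 0, and let g : (0,∞) → (0,∞) be nondecreasing and continuous on [x₀,∞). Let j(x) = x^{d+α} g(x^α), which is strictly increasing and continuous on [x₀,∞) with j(x) → ∞; for t ≥ t₀ := j(x₀) let x_t = j^{-1}(t) and h(t) = g(x_t^α). Then the following are equivalent: (i) the limit a := lim_{x→∞} (log g(x)) / (log x) exists in [0,∞]; (ii) the limit b := lim_{t→∞} (log x_t) / (log t) exists in [0, 1/(d+α)]; (iii) the limit c := lim_{t→∞} (log h(t)) / (log t) exists in [0,1]. Moreover, when they exist, b = 1/(d + (a+1)α) and c = 1 - (d+α)b = 1 - (d+α)/(d + (a+1)α), with the conventions 1/∞ = 0 and 1/0⁺ = ∞. -/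
open Filter Set Topology Real

/-- With `j(x) = x^{d+α} g(x^α)`, `x_t = j⁻¹(t)` and `h(t) = g(x_t^α)`,
the following are equivalent: (i) `lim log g(x)/log x = a ∈ [0,∞]` exists;
(ii) `lim log x_t/log t = b ∈ [0,1/(d+α)]` exists; (iii) `lim log h(t)/log t = c ∈ [0,1]`
exists; and then `b = 1/(d+(a+1)α)`, `c = 1-(d+α)b` (with `1/∞ = 0`). -/
theorem stmt14 (α d x₀ : ℝ) (hα : 0 < α) (hd : 0 < d) (hx₀ : 0 < x₀)
    (g : ℝ → ℝ) (hgpos : ∀ x > (0:ℝ), 0 < g x) (hgmono : MonotoneOn g (Set.Ioi (0:ℝ)))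
    (hgcont : ContinuousOn g (Set.Ici x₀))
    (xt h : ℝ → ℝ)
    (hxt : ∀ t ≥ x₀ ^ (d+α) * g (x₀ ^ α),
      x₀ ≤ xt t ∧ (xt t) ^ (d+α) * g ((xt t) ^ α) = t)
    (hh : ∀ t, h t = g ((xt t) ^ α)) :
    ((∃ a : EReal, 0 ≤ a ∧
        Tendsto (fun x : ℝ => ((Real.log (g x) / Real.log x : ℝ) : EReal)) atTop (nhds a))
      ↔ (∃ b : ℝ, 0 ≤ b ∧ b ≤ 1/(d+α) ∧
          Tendsto (fun t : ℝ => Real.log (xt t) / Real.log t) atTop (nhds b)))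
    ∧ ((∃ a : EReal, 0 ≤ a ∧
        Tendsto (fun x : ℝ => ((Real.log (g x) / Real.log x : ℝ) : EReal)) atTop (nhds a))
      ↔ (∃ c : ℝ, 0 ≤ c ∧ c ≤ 1 ∧
          Tendsto (fun t : ℝ => Real.log (h t) / Real.log t) atTop (nhds c)))
    ∧ (∀ a : EReal, 0 ≤ a →
        Tendsto (fun x : ℝ => ((Real.log (g x) / Real.log x : ℝ) : EReal)) atTop (nhds a) →
        Tendsto (fun t : ℝ => Real.log (xt t) / Real.log t) atTop
          (nhds (if a = ⊤ then (0:ℝ) else 1 / (d + (a.toReal + 1) * α)))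
        ∧ Tendsto (fun t : ℝ => Real.log (h t) / Real.log t) atTop
          (nhds (1 - (d+α) * (if a = ⊤ then (0:ℝ) else 1 / (d + (a.toReal + 1) * α))))) := by
  have hdα : (0:ℝ) < d + α := by linarith
  set t₀ := x₀ ^ (d+α) * g (x₀ ^ α) with ht₀
  have hx₀α : (0:ℝ) < x₀ ^ α := Real.rpow_pos_of_pos hx₀ α
  have hgx₀ : 0 < g (x₀ ^ α) := hgpos _ hx₀α
  set j : ℝ → ℝ := fun x => x ^ (d+α) * g (x ^ α) with hjdef
  have hjmono : StrictMonoOn j (Ici x₀) := by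
    intro x hx y hy hxy
    have hx0 : 0 < x := lt_of_lt_of_le hx₀ hx
    have hy0 : 0 < y := lt_of_lt_of_le hx₀ hy
    have h1 : x ^ (d+α) < y ^ (d+α) := Real.rpow_lt_rpow hx0.le hxy hdα
    have h2 : g (x ^ α) ≤ g (y ^ α) :=
      hgmono (Real.rpow_pos_of_pos hx0 α) (Real.rpow_pos_of_pos hy0 α)
        (Real.rpow_le_rpow hx0.le hxy.le hα.le)
    exact mul_lt_mul h1 h2 (hgpos _ (Real.rpow_pos_of_pos hx0 α))
      (Real.rpow_pos_of_pos hy0 _).le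
  have hjx₀ : ∀ x, x₀ ≤ x → t₀ ≤ j x := by
    intro x hx
    have hx0 : 0 < x := lt_of_lt_of_le hx₀ hx
    have h1 : x₀ ^ (d+α) ≤ x ^ (d+α) := Real.rpow_le_rpow hx₀.le hx hdα.le
    have h2 : g (x₀ ^ α) ≤ g (x ^ α) :=
      hgmono hx₀α (Real.rpow_pos_of_pos hx0 α) (Real.rpow_le_rpow hx₀.le hx hα.le)
    exact mul_le_mul h1 h2 hgx₀.le (Real.rpow_pos_of_pos hx0 _).le
  have hjx : ∀ x, x₀ ≤ x → xt (j x) = x := by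
    intro x hx
    obtain ⟨h1, h2⟩ := hxt (j x) (hjx₀ x hx)
    exact hjmono.injOn h1 hx h2
  have hjtop : Tendsto j atTop atTop := by
    apply tendsto_atTop_mono' atTop
      (f₁ := fun x => x ^ (d+α) * g (x₀ ^ α))
    · filter_upwards [eventually_ge_atTop x₀] with x hx
      have hx0 : 0 < x := lt_of_lt_of_le hx₀ hx
      have h2 : g (x₀ ^ α) ≤ g (x ^ α) :=
        hgmono hx₀α (Real.rpow_pos_of_pos hx0 α) (Real.rpow_le_rpow hx₀.le hx hα.le)
      exact mul_le_mul_of_nonneg_left h2 (Real.rpow_pos_of_pos hx0 _).le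
    · exact (tendsto_rpow_atTop hdα).atTop_mul_const hgx₀
  have hxttop : Tendsto xt atTop atTop := by
    rw [tendsto_atTop]
    intro M
    filter_upwards [eventually_ge_atTop (j (max M x₀)), eventually_ge_atTop t₀]
      with t h1 h2
    obtain ⟨hx1, hx2⟩ := hxt t h2
    by_contra hcon
    push_neg at hcon
    have hlt : xt t < max M x₀ := lt_of_lt_of_le hcon (le_max_left _ _)
    have hj1 : j (xt t) < j (max M x₀) := hjmono hx1 (Set.mem_Ici.2 (le_max_right _ _)) hlt
    have hj2 : j (xt t) = t := hx2
    linarith [hj1, hj2 ▸ hj1]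
  -- the fundamental identity
  have hid : ∀ᶠ t : ℝ in atTop,
      Real.log t = (d+α) * Real.log (xt t) + Real.log (g ((xt t) ^ α)) := by
    filter_upwards [eventually_ge_atTop t₀] with t ht
    obtain ⟨h1, h2⟩ := hxt t ht
    have hx0 : 0 < xt t := lt_of_lt_of_le hx₀ h1
    conv_lhs => rw [← h2]
    rw [Real.log_mul (by positivity)
        (hgpos _ (Real.rpow_pos_of_pos hx0 α)).ne', Real.log_rpow hx0]
  have hpos : ∀ᶠ t : ℝ in atTop, 0 < Real.log (xt t) ∧ 0 < Real.log t := by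
    filter_upwards [hxttop.eventually (eventually_gt_atTop 1), eventually_gt_atTop 1]
      with t h1 h2
    exact ⟨Real.log_pos h1, Real.log_pos h2⟩
  -- key eventual identities
  have hkey : ∀ᶠ t : ℝ in atTop,
      Real.log (xt t) / Real.log t
        = ((d+α) + α * (Real.log (g ((xt t) ^ α)) / Real.log ((xt t) ^ α)))⁻¹
      ∧ Real.log (g ((xt t) ^ α)) / Real.log t
        = 1 - (d+α) * (Real.log (xt t) / Real.log t) := by
    filter_upwards [hid, hpos, hxttop.eventually (eventually_gt_atTop 1)]
      with t hidt hpt hxt1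
    obtain ⟨hL, hT⟩ := hpt
    have hx0 : (0:ℝ) < xt t := by linarith
    have hlrw : Real.log ((xt t) ^ α) = α * Real.log (xt t) := Real.log_rpow hx0 α
    have hT' : (d+α) * Real.log (xt t) + Real.log (g ((xt t) ^ α)) ≠ 0 := by
      rw [← hidt]; exact hT.ne'
    constructor
    · rw [hlrw, hidt]
      have hαne := hα.ne'
      have hLne := hL.ne'
      have e1 : (d+α) + α * (Real.log (g ((xt t) ^ α)) / (α * Real.log (xt t)))
          = ((d+α) * Real.log (xt t) + Real.log (g ((xt t) ^ α))) / Real.log (xt t) := by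
        field_simp
      rw [e1, inv_div]
    · rw [hidt]
      field_simp
      ring
  -- substitution: log g y / log y equals U at t = j (y^(1/α))
  have hcomp : Tendsto (fun y : ℝ => j (y ^ α⁻¹)) atTop atTop :=
    hjtop.comp (tendsto_rpow_atTop (inv_pos.2 hα))
  have hGsub : ∀ᶠ y : ℝ in atTop, Real.log (g y) / Real.log y
      = Real.log (g ((xt (j (y ^ α⁻¹))) ^ α)) / Real.log ((xt (j (y ^ α⁻¹))) ^ α) := by
    filter_upwards [eventually_ge_atTop (max (x₀ ^ α) 1)] with y hy
    have hy0 : (0:ℝ) < y := lt_of_lt_of_le one_pos (le_trans (le_max_right _ _) hy)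
    have hx : x₀ ≤ y ^ α⁻¹ := by
      have h1 : (x₀ ^ α) ^ α⁻¹ ≤ y ^ α⁻¹ :=
        Real.rpow_le_rpow hx₀α.le (le_trans (le_max_left _ _) hy) (inv_pos.2 hα).le
      rwa [Real.rpow_rpow_inv hx₀.le hα.ne'] at h1
    rw [hjx _ hx, Real.rpow_inv_rpow hy0.le hα.ne']
  have hxtαtop : Tendsto (fun t => (xt t) ^ α) atTop atTop :=
    (tendsto_rpow_atTop hα).comp hxttop
  -- main forward lemma (quantitative)
  have main : ∀ a : EReal, 0 ≤ a →
      Tendsto (fun x : ℝ => ((Real.log (g x) / Real.log x : ℝ) : EReal)) atTop (nhds a) →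
      Tendsto (fun t : ℝ => Real.log (xt t) / Real.log t) atTop
        (nhds (if a = ⊤ then (0:ℝ) else 1 / (d + (a.toReal + 1) * α))) := by
    intro a ha hG
    induction a using EReal.rec with
    | bot => exact absurd ha (by simp)
    | coe A =>
      have hA : 0 ≤ A := by exact_mod_cast ha
      rw [EReal.tendsto_coe] at hG
      have hu : Tendsto (fun t : ℝ =>
          Real.log (g ((xt t) ^ α)) / Real.log ((xt t) ^ α)) atTop (nhds A) :=
        hG.comp hxtαtop
      have hden : (0:ℝ) < d + (A+1)*α := by nlinarith
      have h1 : Tendsto (fun t : ℝ =>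
          (d+α) + α * (Real.log (g ((xt t) ^ α)) / Real.log ((xt t) ^ α)))
          atTop (nhds (d+(A+1)*α)) := by
        have := (hu.const_mul α).const_add (d+α)
        convert this using 2
        ring
      have h2 := h1.inv₀ hden.ne'
      have h3 : Tendsto (fun t : ℝ => Real.log (xt t) / Real.log t) atTop
          (nhds (d+(A+1)*α)⁻¹) := by
        apply h2.congr'
        filter_upwards [hkey] with t hk
        exact hk.1.symm
      simpa [EReal.toReal_coe, one_div] using h3
    | top =>
      have hG' : Tendsto (fun x : ℝ => Real.log (g x) / Real.log x) atTop atTop := by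
        rw [tendsto_atTop]
        intro M
        filter_upwards [EReal.tendsto_nhds_top_iff_real.1 hG M] with x hx
        exact_mod_cast le_of_lt hx
      have hu : Tendsto (fun t : ℝ =>
          Real.log (g ((xt t) ^ α)) / Real.log ((xt t) ^ α)) atTop atTop :=
        hG'.comp hxtαtop
      have h1 : Tendsto (fun t : ℝ =>
          (d+α) + α * (Real.log (g ((xt t) ^ α)) / Real.log ((xt t) ^ α)))
          atTop atTop :=
        tendsto_atTop_add_const_left _ _ (hu.const_mul_atTop hα)
      have h2 : Tendsto (fun t : ℝ => Real.log (xt t) / Real.log t) atTop (nhds 0) := by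
        apply (h1.inv_tendsto_atTop).congr'
        filter_upwards [hkey] with t hk
        exact hk.1.symm
      simpa using h2
  -- the h-limit from the b-limit
  have mainH : ∀ b : ℝ,
      Tendsto (fun t : ℝ => Real.log (xt t) / Real.log t) atTop (nhds b) →
      Tendsto (fun t : ℝ => Real.log (h t) / Real.log t) atTop (nhds (1 - (d+α) * b)) := by
    intro b hB
    have h1 : Tendsto (fun t : ℝ =>
        1 - (d+α) * (Real.log (xt t) / Real.log t)) atTop (nhds (1 - (d+α)*b)) :=
      (hB.const_mul (d+α)).const_sub 1
    apply h1.congr'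
    filter_upwards [hkey] with t hk
    rw [hh t]
    exact hk.2.symm
  -- reverse: from b-limit to a-limit
  have rev : ∀ b : ℝ, 0 ≤ b → b ≤ 1/(d+α) →
      Tendsto (fun t : ℝ => Real.log (xt t) / Real.log t) atTop (nhds b) →
      ∃ a : EReal, 0 ≤ a ∧
        Tendsto (fun x : ℝ => ((Real.log (g x) / Real.log x : ℝ) : EReal)) atTop (nhds a) := by
    intro b hb0 hb1 hB
    have hGg : Tendsto (fun t : ℝ => Real.log (g ((xt t) ^ α)) / Real.log t)
        atTop (nhds (1 - (d+α)*b)) := by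
      apply ((hB.const_mul (d+α)).const_sub 1).congr'
      filter_upwards [hkey] with t hk
      exact hk.2.symm
    have hUeq : ∀ᶠ t : ℝ in atTop,
        (Real.log (g ((xt t) ^ α)) / Real.log t) * (Real.log t / Real.log (xt t)) * α⁻¹
          = Real.log (g ((xt t) ^ α)) / Real.log ((xt t) ^ α) := by
      filter_upwards [hpos, hxttop.eventually (eventually_gt_atTop 1)] with t hpt hxt1
      obtain ⟨hL, hT⟩ := hpt
      have hx0 : (0:ℝ) < xt t := by linarith
      rw [Real.log_rpow hx0, div_mul_div_comm,
        mul_comm (Real.log (g ((xt t) ^ α))) (Real.log t),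
        mul_div_mul_left _ _ hT.ne', div_mul_eq_div_div, div_div]
      ring_nf
    rcases eq_or_lt_of_le hb0 with hb | hb
    · -- b = 0, a = ⊤
      have hBpos : ∀ᶠ t : ℝ in atTop, 0 < Real.log (xt t) / Real.log t := by
        filter_upwards [hpos] with t hpt
        exact div_pos hpt.1 hpt.2
      have h1 : Tendsto (fun t : ℝ => Real.log (xt t) / Real.log t) atTop (𝓝[>] 0) := by
        rw [tendsto_nhdsWithin_iff]
        exact ⟨hb ▸ hB, hBpos⟩
      have hinv : Tendsto (fun t : ℝ => Real.log t / Real.log (xt t)) atTop atTop := by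
        apply h1.inv_tendsto_nhdsGT_zero.congr'
        filter_upwards [hpos] with t hpt
        simp [Pi.inv_apply, inv_div]
      have hlim1 : (0:ℝ) < 1 - (d+α)*b := by rw [← hb]; norm_num
      have hU : Tendsto (fun t : ℝ =>
          Real.log (g ((xt t) ^ α)) / Real.log ((xt t) ^ α)) atTop atTop := by
        apply Tendsto.congr' hUeq
        exact ((Filter.Tendsto.pos_mul_atTop hlim1 hGg hinv).atTop_mul_const (inv_pos.2 hα))
      have hGtop : Tendsto (fun y : ℝ => Real.log (g y) / Real.log y) atTop atTop := by
        apply (hU.comp hcomp).congr'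
        filter_upwards [hGsub] with y hy
        exact hy.symm
      refine ⟨⊤, le_top, ?_⟩
      rw [EReal.tendsto_nhds_top_iff_real]
      intro M
      filter_upwards [hGtop.eventually (eventually_gt_atTop M)] with y hy
      exact_mod_cast hy
    · -- 0 < b, a finite
      have hinv : Tendsto (fun t : ℝ => Real.log t / Real.log (xt t)) atTop (nhds b⁻¹) := by
        apply (hB.inv₀ hb.ne').congr'
        filter_upwards [hpos] with t hpt
        rw [inv_div]
      have hU : Tendsto (fun t : ℝ =>
          Real.log (g ((xt t) ^ α)) / Real.log ((xt t) ^ α))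
          atTop (nhds ((1 - (d+α)*b) * b⁻¹ * α⁻¹)) := by
        apply Tendsto.congr' hUeq
        exact (hGg.mul hinv).mul_const α⁻¹
      set A := (1 - (d+α)*b) * b⁻¹ * α⁻¹ with hAdef
      have hA0 : 0 ≤ A := by
        have h2 : (d+α)*b ≤ 1 := by
          rw [one_div] at hb1
          calc (d+α)*b ≤ (d+α)*(d+α)⁻¹ := by
                exact mul_le_mul_of_nonneg_left hb1 hdα.le
            _ = 1 := mul_inv_cancel₀ hdα.ne'
        have : 0 ≤ 1 - (d+α)*b := by linarith
        positivity
      have hGten : Tendsto (fun y : ℝ => Real.log (g y) / Real.log y) atTop (nhds A) := by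
        apply (hU.comp hcomp).congr'
        filter_upwards [hGsub] with y hy
        exact hy.symm
      exact ⟨(A : EReal), by exact_mod_cast hA0, EReal.tendsto_coe.2 hGten⟩
  -- bounds for the forward value
  have hval : ∀ a : EReal, 0 ≤ a →
      0 ≤ (if a = ⊤ then (0:ℝ) else 1 / (d + (a.toReal + 1) * α))
      ∧ (if a = ⊤ then (0:ℝ) else 1 / (d + (a.toReal + 1) * α)) ≤ 1/(d+α) := by
    intro a ha
    by_cases hat : a = ⊤
    · simp only [if_pos hat]
      exact ⟨le_refl 0, by positivity⟩
    · simp only [if_neg hat]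
      have hA : 0 ≤ a.toReal := by
        have h0 := EReal.toReal_le_toReal ha (by simp) hat
        simpa using h0
      have hden : (0:ℝ) < d + (a.toReal + 1) * α := by nlinarith
      constructor
      · positivity
      · apply one_div_le_one_div_of_le hdα
        nlinarith
  constructor
  · constructor
    · rintro ⟨a, ha, hG⟩
      obtain ⟨hv0, hv1⟩ := hval a ha
      exact ⟨_, hv0, hv1, main a ha hG⟩
    · rintro ⟨b, hb0, hb1, hB⟩
      exact rev b hb0 hb1 hB
  constructor
  · constructor
    · rintro ⟨a, ha, hG⟩
      obtain ⟨hv0, hv1⟩ := hval a ha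
      refine ⟨_, ?_, ?_, mainH _ (main a ha hG)⟩
      · have : (d+α) * (if a = ⊤ then (0:ℝ) else 1 / (d + (a.toReal + 1) * α)) ≤ 1 := by
          calc (d+α) * _ ≤ (d+α) * (1/(d+α)) := mul_le_mul_of_nonneg_left hv1 hdα.le
            _ = 1 := by field_simp
        linarith
      · nlinarith [mul_nonneg hdα.le hv0]
    · rintro ⟨c, hc0, hc1, hC⟩
      have hB : Tendsto (fun t : ℝ => Real.log (xt t) / Real.log t) atTop
          (nhds ((1 - c)/(d+α))) := by
        have h1 : Tendsto (fun t : ℝ => (1 - Real.log (h t) / Real.log t)/(d+α))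
            atTop (nhds ((1 - c)/(d+α))) := (hC.const_sub 1).div_const (d+α)
        apply h1.congr'
        filter_upwards [hkey] with t hk
        have := hk.2
        rw [← hh t] at this
        rw [this, sub_sub_cancel]
        exact mul_div_cancel_left₀ _ hdα.ne'
      refine rev _ ?_ ?_ hB
      · exact div_nonneg (by linarith) hdα.le
      · rw [div_le_div_iff_of_pos_right hdα]
        nlinarith
  · intro a ha hG
    exact ⟨main a ha hG, mainH _ (main a ha hG)⟩
end

section
/- Let α, d > 0 and D₀ > 0, and define j(x) = x^{d+α} (e^{x^α/D₀} − 1) for x > 0, and k(t) = ( D₀ · log( t / (D₀ log t)^{(d+α)/α} + 1 ) )^{1/α} for large t. Then k is an asymptotic inverse of j at infinity: lim_{t→∞} j(k(t)) / t = 1. -/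
open Filter Set Topology Real

/-- With `j(x) = x^{d+α}(e^{x^α/D₀} − 1)` and
`k(t) = (D₀ log(t/(D₀ log t)^{(d+α)/α} + 1))^{1/α}`, k is an asymptotic inverse of j
at infinity: `j(k(t))/t → 1` as `t → ∞`. -/
theorem stmt19 (α d D₀ : ℝ) (hα : 0 < α) (hd : 0 < d) (hD₀ : 0 < D₀)
    (j k : ℝ → ℝ)
    (hj : ∀ x > (0:ℝ), j x = x ^ (d+α) * (Real.exp (x ^ α / D₀) - 1))
    (hk : ∀ t, k t = (D₀ * Real.log (t / (D₀ * Real.log t) ^ ((d+α)/α) + 1)) ^ (1/α)) :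
    Tendsto (fun t => j (k t) / t) atTop (nhds 1) := by
  have hα' : α ≠ 0 := hα.ne'
  set c : ℝ := (d + α) / α with hc
  have hcpos : 0 < c := div_pos (by linarith) hα
  set A : ℝ → ℝ := fun t => D₀ * Real.log t with hA
  set u : ℝ → ℝ := fun t => t / (A t) ^ c with hu
  set L : ℝ → ℝ := fun t => Real.log (u t + 1) with hL
  have h1 : ∀ᶠ t : ℝ in atTop, 1 < t := eventually_gt_atTop 1
  have hlogpos : ∀ t : ℝ, 1 < t → 0 < Real.log t := fun t ht => Real.log_pos ht
  have hApos : ∀ t : ℝ, 1 < t → 0 < A t := fun t ht => mul_pos hD₀ (hlogpos t ht)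
  have hupos : ∀ t : ℝ, 1 < t → 0 < u t := fun t ht =>
    div_pos (lt_trans one_pos ht) (Real.rpow_pos_of_pos (hApos t ht) c)
  have hLpos : ∀ t : ℝ, 1 < t → 0 < L t := fun t ht =>
    Real.log_pos (by have := hupos t ht; linarith)
  have hlogdiv : Tendsto (fun x : ℝ => Real.log x / x) atTop (nhds 0) :=
    Real.isLittleO_log_id_atTop.tendsto_div_nhds_zero
  -- Step 1 : log (A t) / log t → 0
  have step1 : Tendsto (fun t => Real.log (A t) / Real.log t) atTop (nhds 0) := by
    have h2 : Tendsto (fun t : ℝ => Real.log D₀ / Real.log t) atTop (nhds 0) :=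
      tendsto_const_nhds.div_atTop Real.tendsto_log_atTop
    have h3 : Tendsto (fun t : ℝ => Real.log (Real.log t) / Real.log t) atTop (nhds 0) :=
      hlogdiv.comp Real.tendsto_log_atTop
    have h4 := h2.add h3
    rw [add_zero] at h4
    refine h4.congr' ?_
    filter_upwards [h1] with t ht
    simp only [hA]
    rw [Real.log_mul hD₀.ne' (hlogpos t ht).ne', add_div]
  -- Step 2 : log (u t) = log t - c * log (A t)
  have step2 : ∀ t : ℝ, 1 < t → Real.log (u t) = Real.log t - c * Real.log (A t) := by
    intro t ht
    simp only [hu]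
    rw [Real.log_div (lt_trans one_pos ht).ne' (Real.rpow_pos_of_pos (hApos t ht) c).ne',
      Real.log_rpow (hApos t ht)]
  -- Step 3 : log (u t) / log t → 1
  have step3 : Tendsto (fun t => Real.log (u t) / Real.log t) atTop (nhds 1) := by
    have h5 : Tendsto (fun t => (1:ℝ) - c * (Real.log (A t) / Real.log t)) atTop
        (nhds (1 - c * 0)) := tendsto_const_nhds.sub (step1.const_mul c)
    rw [mul_zero, sub_zero] at h5
    refine h5.congr' ?_
    filter_upwards [h1] with t ht
    rw [step2 t ht, sub_div, mul_div_assoc, div_self (hlogpos t ht).ne']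
  -- Step 4 : log (u t) → ∞
  have step4 : Tendsto (fun t => Real.log (u t)) atTop atTop := by
    have h6 := step3.pos_mul_atTop one_pos Real.tendsto_log_atTop
    refine h6.congr' ?_
    filter_upwards [h1] with t ht
    rw [div_mul_cancel₀ _ (hlogpos t ht).ne']
  -- Step 5 : u → ∞
  have step5 : Tendsto u atTop atTop := by
    have h7 := Real.tendsto_exp_atTop.comp step4
    refine h7.congr' ?_
    filter_upwards [h1] with t ht
    exact Real.exp_log (hupos t ht)
  -- Step 6 : L t - log (u t) → 0
  have step6 : Tendsto (fun t => L t - Real.log (u t)) atTop (nhds 0) := by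
    have h8 : Tendsto (fun t => (u t + 1) / u t) atTop (nhds 1) := by
      have h9 : Tendsto (fun t => 1 + (u t)⁻¹) atTop (nhds (1 + 0)) :=
        tendsto_const_nhds.add step5.inv_tendsto_atTop
      rw [add_zero] at h9
      refine h9.congr' ?_
      filter_upwards [h1] with t ht
      rw [add_div, div_self (hupos t ht).ne', one_div]
    have h10 := (Real.continuousAt_log one_ne_zero).tendsto.comp h8
    rw [Real.log_one] at h10
    refine h10.congr' ?_
    filter_upwards [h1] with t ht
    simp only [Function.comp, hL]
    rw [Real.log_div (by have := hupos t ht; linarith) (hupos t ht).ne']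
  -- Step 7 : L t / log t → 1
  have step7 : Tendsto (fun t => L t / Real.log t) atTop (nhds 1) := by
    have h11 : Tendsto (fun t => (L t - Real.log (u t)) / Real.log t) atTop (nhds 0) :=
      step6.div_atTop Real.tendsto_log_atTop
    have h12 := h11.add step3
    rw [zero_add] at h12
    refine h12.congr' ?_
    filter_upwards [h1] with t ht
    rw [← add_div, sub_add_cancel]
  -- conclude
  have hrpow : Tendsto (fun x : ℝ => x ^ c) (nhds 1) (nhds 1) := by
    have h13 := (Real.continuousAt_rpow_const 1 c (Or.inl one_ne_zero)).tendsto
    simpa using h13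
  refine (hrpow.comp step7).congr' ?_
  filter_upwards [h1] with t ht
  have hLt := hLpos t ht
  have hut := hupos t ht
  have hDL : 0 < D₀ * L t := mul_pos hD₀ hLt
  have hkt : k t = (D₀ * L t) ^ (1/α) := by rw [hk t]
  have hktpos : 0 < k t := hkt ▸ Real.rpow_pos_of_pos hDL _
  have hka : (k t) ^ α = D₀ * L t := by
    rw [hkt, ← Real.rpow_mul hDL.le, one_div_mul_cancel hα', Real.rpow_one]
  have hkd : (k t) ^ (d + α) = (D₀ * L t) ^ c := by
    rw [hkt, ← Real.rpow_mul hDL.le, hc, one_div, inv_mul_eq_div]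
  have hexp : Real.exp ((k t) ^ α / D₀) - 1 = u t := by
    rw [hka, mul_div_cancel_left₀ _ hD₀.ne', hL, Real.exp_log (by linarith)]
    ring
  have hjk : j (k t) = (D₀ * L t) ^ c * u t := by
    rw [hj (k t) hktpos, hkd, hexp]
  show (L t / Real.log t) ^ c = j (k t) / t
  have htne : (t : ℝ) ≠ 0 := (lt_trans one_pos ht).ne'
  have hAt := hApos t ht
  have hAc : (0:ℝ) < A t ^ c := Real.rpow_pos_of_pos hAt c
  have e1 : (D₀ * L t) ^ c * u t / t = (D₀ * L t) ^ c / A t ^ c := by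
    simp only [hu]
    field_simp
  rw [hjk, e1, ← Real.div_rpow hDL.le hAt.le]
  congr 1
  simp only [hA]
  rw [mul_div_mul_left _ _ hD₀.ne']
end
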